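/- Let F be an algebraically closed field, n ≥ 1, and A a subalgebra of M_n(F) with trace zero for every element (tr(A) = 0 for all A ∈ A). Then A is reducible: either A = {0} or A has a nontrivial invariant subspace of F^n. -/

import Mathlib

open Matrix Module

/-- over an algebraically closed field, a subalgebra of `M_n(F)`
on which the trace vanishes identically is reducible: it is zero or has a
nontrivial invariant subspace. -/
theorem stmt14 {F : Type*} [Field F] [IsAlgClosed F] {n : ℕ} (hn : 1 ≤ n)
    (𝒜 : NonUnitalSubalgebra F (Matrix (Fin n) (Fin n) F))
    (htr : ∀ A ∈ 𝒜, Matrix.trace A = 0) :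
    (∀ A ∈ 𝒜, A = 0) ∨
    ∃ W : Submodule F (Fin n → F), W ≠ ⊥ ∧ W ≠ ⊤ ∧
      ∀ A ∈ 𝒜, ∀ x ∈ W, A.mulVec x ∈ W := by
  classical
  by_cases h0 : ∀ A ∈ 𝒜, A = 0
  · exact Or.inl h0
  right
  by_contra hW
  push_neg at hW h0
  obtain ⟨A₀, hA₀m, hA₀⟩ := h0
  -- every invariant subspace is trivial
  have hirr : ∀ W : Submodule F (Fin n → F),
      (∀ A ∈ 𝒜, ∀ x ∈ W, A.mulVec x ∈ W) → W = ⊥ ∨ W = ⊤ := by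
    intro W hWinv
    by_contra hc
    push_neg at hc
    obtain ⟨A, hA, x, hx, hax⟩ := hW W hc.1 hc.2
    exact hax (hWinv A hA x hx)
  -- a matrix is zero iff it kills every vector
  have hzero : ∀ T : Matrix (Fin n) (Fin n) F, (∀ x, T.mulVec x = 0) → T = 0 := by
    intro T h
    ext i j
    have := congrFun (h (Pi.single j 1)) i
    simpa using this
  -- the common kernel is ⊥
  have hker : ∀ v : Fin n → F, (∀ A ∈ 𝒜, A.mulVec v = 0) → v = 0 := by
    intro v hv
    set K : Submodule F (Fin n → F) :=
      { carrier := {v | ∀ A ∈ 𝒜, A.mulVec v = 0}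
        add_mem' := by
          intro a b ha hb A hA
          rw [Matrix.mulVec_add, ha A hA, hb A hA, add_zero]
        zero_mem' := by intro A hA; simp
        smul_mem' := by
          intro c a ha A hA
          rw [Matrix.mulVec_smul, ha A hA, smul_zero] } with hK
    have hKinv : ∀ A ∈ 𝒜, ∀ x ∈ K, A.mulVec x ∈ K := by
      intro A hA x hx C hC
      rw [Matrix.mulVec_mulVec]
      exact hx (C * A) (mul_mem hC hA)
    rcases hirr K hKinv with h | h
    · have : v ∈ K := hv
      rw [h] at this
      simpa using this
    · exfalso
      apply hA₀
      apply hzero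
      intro x
      have hx : x ∈ K := by rw [h]; trivial
      exact hx A₀ hA₀m
  -- transitivity: the orbit of a nonzero vector is everything
  have horb : ∀ v : Fin n → F, v ≠ 0 → ∀ y, ∃ A ∈ 𝒜, A.mulVec v = y := by
    intro v hv
    set O : Submodule F (Fin n → F) :=
      { carrier := {y | ∃ A ∈ 𝒜, A.mulVec v = y}
        add_mem' := by
          rintro a b ⟨A, hA, rfl⟩ ⟨B, hB, rfl⟩
          exact ⟨A + B, add_mem hA hB, Matrix.add_mulVec _ _ _⟩
        zero_mem' := ⟨0, zero_mem 𝒜, Matrix.zero_mulVec v⟩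
        smul_mem' := by
          rintro c a ⟨A, hA, rfl⟩
          exact ⟨c • A, SMulMemClass.smul_mem c hA, Matrix.smul_mulVec _ _ _⟩ } with hO
    have hOinv : ∀ A ∈ 𝒜, ∀ x ∈ O, A.mulVec x ∈ O := by
      rintro A hA x ⟨B, hB, rfl⟩
      exact ⟨A * B, mul_mem hA hB, (Matrix.mulVec_mulVec _ _ _).symm⟩
    rcases hirr O hOinv with h | h
    · exfalso
      apply hv
      apply hker
      intro A hA
      have : A.mulVec v ∈ O := ⟨A, hA, rfl⟩
      rw [h] at this
      simpa using this
    · intro y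
      have : y ∈ O := by rw [h]; trivial
      exact this
  -- pick a nonzero element of minimal rank
  have hP : ∃ r : ℕ, ∃ T, T ∈ 𝒜 ∧ T ≠ 0 ∧
      finrank F (LinearMap.range T.mulVecLin) = r :=
    ⟨_, A₀, hA₀m, hA₀, rfl⟩
  obtain ⟨T, hTm, hT0, hTr⟩ := Nat.find_spec hP
  have hmin : ∀ M : Matrix (Fin n) (Fin n) F, M ∈ 𝒜 → M ≠ 0 →
      Nat.find hP ≤ finrank F (LinearMap.range M.mulVecLin) := by
    intro M hM hM0
    exact Nat.find_min' hP ⟨M, hM, hM0, rfl⟩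
  set R : Submodule F (Fin n → F) := LinearMap.range T.mulVecLin with hRdef
  have hRne : R ≠ ⊥ := by
    intro h
    apply hT0
    apply hzero
    intro x
    have : T.mulVec x ∈ R := LinearMap.mem_range_self _ x
    rw [h] at this
    simpa using this
  haveI : Nontrivial R := Submodule.nontrivial_iff_ne_bot.mpr hRne
  have hrpos : 0 < finrank F R := finrank_pos
  -- T has rank one
  have hr1 : finrank F R = 1 := by
    by_contra hne1
    have hr2 : 2 ≤ finrank F R := by omega
    -- pick z₁ ∈ R nonzero and z₂ ∈ R outside the span of z₁
    obtain ⟨z₁, hz₁R, hz₁0⟩ := Submodule.exists_mem_ne_zero_of_ne_bot hRne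
    have hspan : Submodule.span F {z₁} ≠ R := by
      intro h
      have := finrank_span_singleton (K := F) hz₁0
      rw [h] at this
      omega
    obtain ⟨z₂, hz₂R, hz₂⟩ : ∃ z₂ ∈ R, z₂ ∉ Submodule.span F {z₁} := by
      by_contra hc
      push_neg at hc
      apply hspan
      refine le_antisymm ?_ hc
      rw [Submodule.span_singleton_le_iff_mem]
      exact hz₁R
    obtain ⟨u, hu⟩ := hz₁R
    obtain ⟨v, hv⟩ := hz₂R
    have hu' : T *ᵥ u = z₁ := hu
    have hv' : T *ᵥ v = z₂ := hv
    obtain ⟨S, hSm, hSv⟩ := horb z₁ hz₁0 v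
    -- T*S maps R to itself; take an eigenvalue
    have hNmap : ∀ x ∈ R, (T * S).mulVecLin x ∈ R := by
      intro x _
      rw [mulVecLin_apply, ← Matrix.mulVec_mulVec]
      exact LinearMap.mem_range_self _ _
    set φ : Module.End F R := ((T * S).mulVecLin).restrict hNmap with hφ
    obtain ⟨μ, hμ⟩ := Module.End.exists_eigenvalue φ
    obtain ⟨z, hz⟩ := hμ.exists_hasEigenvector
    set M : Matrix (Fin n) (Fin n) F := T * S * T - μ • T with hM
    have hMm : M ∈ 𝒜 :=
      sub_mem (mul_mem (mul_mem hTm hSm) hTm) (SMulMemClass.smul_mem μ hTm)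
    have hM0 : M ≠ 0 := by
      intro h
      have : M.mulVec u = 0 := by rw [h, Matrix.zero_mulVec]
      rw [hM, Matrix.sub_mulVec, Matrix.smul_mulVec, ← Matrix.mulVec_mulVec,
        ← Matrix.mulVec_mulVec, hu', hSv, hv', sub_eq_zero] at this
      exact hz₂ (this ▸ Submodule.smul_mem _ μ (Submodule.mem_span_singleton_self z₁))
    -- the rank of M is smaller than that of T
    set L : (Fin n → F) →ₗ[F] (Fin n → F) := (T * S).mulVecLin - μ • LinearMap.id with hL
    have hcomp : M.mulVecLin = L ∘ₗ T.mulVecLin := by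
      apply LinearMap.ext
      intro x
      simp only [mulVecLin_apply, LinearMap.comp_apply, hM, hL, LinearMap.sub_apply,
        LinearMap.smul_apply, LinearMap.id_apply]
      rw [Matrix.sub_mulVec, Matrix.smul_mulVec, Matrix.mulVec_mulVec]
    set g : R →ₗ[F] (Fin n → F) := L ∘ₗ R.subtype with hg
    have hrange : LinearMap.range M.mulVecLin = LinearMap.range g := by
      rw [hcomp, hg, LinearMap.range_comp, LinearMap.range_comp, Submodule.range_subtype]
    have hgz : g z = 0 := by
      have hzeq : (φ z : Fin n → F) = μ • (z : Fin n → F) := by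
        have := hz.apply_eq_smul
        exact congrArg Subtype.val this
      have hres : (φ z : Fin n → F) = (T * S).mulVecLin (z : Fin n → F) := rfl
      simp only [hg, LinearMap.comp_apply, Submodule.subtype_apply, hL, LinearMap.sub_apply,
        LinearMap.smul_apply, LinearMap.id_apply]
      rw [← hres, hzeq, sub_self]
    have hkerpos : 0 < finrank F (LinearMap.ker g) := by
      have : Nontrivial (LinearMap.ker g) := by
        refine Submodule.nontrivial_iff_ne_bot.mpr ?_
        intro h
        have : z ∈ LinearMap.ker g := hgz
        rw [h] at this
        exact hz.2 (by simpa using this)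
      exact finrank_pos (R := F) (M := LinearMap.ker g)
    have hrn := LinearMap.finrank_range_add_finrank_ker g
    have hfR : finrank F R = finrank F (⊤ : Submodule F R) := (finrank_top F R).symm
    have hlt : finrank F (LinearMap.range M.mulVecLin) < finrank F R := by
      rw [hrange]
      omega
    have := hmin M hMm hM0
    omega
  -- extract the rank-one structure : T = w ⊗ f
  obtain ⟨w', hw'0, hw'span⟩ := finrank_eq_one_iff'.mp hr1
  set w : Fin n → F := (w' : Fin n → F) with hw
  have hw0 : w ≠ 0 := fun h => hw'0 (Subtype.ext h)
  have hcol : ∀ x : Fin n → F, ∃ c : F, T.mulVec x = c • w := by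
    intro x
    obtain ⟨c, hc⟩ := hw'span ⟨T.mulVec x, LinearMap.mem_range_self _ _⟩
    exact ⟨c, by simpa using (congrArg Subtype.val hc).symm⟩
  choose f hf using fun j => hcol (Pi.single j 1)
  have hTentry : ∀ i j, T i j = f j * w i := by
    intro i j
    have := congrFun (hf j) i
    simpa [Matrix.mulVec_single, mul_comm] using this
  have hf0 : ∃ j, f j ≠ 0 := by
    by_contra hc
    push_neg at hc
    apply hT0
    ext i j
    simp [hTentry i j, hc j]
  obtain ⟨j₀, hj₀⟩ := hf0
  -- find B with B.mulVec w dual to f, making trace (T * B) = 1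
  obtain ⟨B, hBm, hBw⟩ := horb w hw0 (Pi.single j₀ (f j₀)⁻¹)
  have htrTB : Matrix.trace (T * B) = 1 := by
    have hTB : Matrix.trace (T * B) = ∑ k, f k * (B.mulVec w) k := by
      simp only [Matrix.trace, Matrix.diag, Matrix.mul_apply, Matrix.mulVec, dotProduct]
      rw [Finset.sum_comm]
      congr 1
      ext k
      rw [Finset.mul_sum]
      congr 1
      ext i
      rw [hTentry i k]
      ring
    rw [hTB, hBw]
    simp [Pi.single_apply, hj₀]
  have := htr (T * B) (mul_mem hTm hBm)
  rw [htrTB] at this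
  exact one_ne_zero this
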